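/- Let L = U³ ⊕ E₈(-1)² ⊕ (-2). Up to the action of O(L), there is exactly one O(L)-orbit of primitive vectors e ∈ L with e² = -2 and divisibility 2 (i.e., (e, L) = 2Z), and for such e one has e ⊕ e^⊥ = L, with e^⊥ ≅ U³ ⊕ E₈(-1)². -/

import Mathlib

/-- The Gram matrix of the (positive definite) root lattice `E₈`. -/
def E8Gram : Matrix (Fin 8) (Fin 8) ℤ :=
  !![2, 0, -1, 0, 0, 0, 0, 0;
     0, 2, 0, -1, 0, 0, 0, 0;
     -1, 0, 2, -1, 0, 0, 0, 0;
     0, -1, -1, 2, -1, 0, 0, 0;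
     0, 0, 0, -1, 2, -1, 0, 0;
     0, 0, 0, 0, -1, 2, -1, 0;
     0, 0, 0, 0, 0, -1, 2, -1;
     0, 0, 0, 0, 0, 0, -1, 2]

/-- Index set for the lattice `L = U³ ⊕ E₈(-1)² ⊕ (-2)` of rank 23. -/
abbrev IdxL := (Fin 3 × Fin 2) ⊕ ((Fin 2 × Fin 8) ⊕ Fin 1)

/-- Index set for the lattice `U³ ⊕ E₈(-1)²` of rank 22. -/
abbrev IdxM := (Fin 3 × Fin 2) ⊕ (Fin 2 × Fin 8)

/-- The bilinear form of `L = U³ ⊕ E₈(-1)² ⊕ (-2)` on `ℤ^23`. -/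
def bL (x y : IdxL → ℤ) : ℤ :=
  (∑ u : Fin 3,
    (x (Sum.inl (u, 0)) * y (Sum.inl (u, 1)) +
      x (Sum.inl (u, 1)) * y (Sum.inl (u, 0))))
  - (∑ c : Fin 2, ∑ i : Fin 8, ∑ j : Fin 8,
      E8Gram i j * x (Sum.inr (Sum.inl (c, i))) * y (Sum.inr (Sum.inl (c, j))))
  - 2 * x (Sum.inr (Sum.inr 0)) * y (Sum.inr (Sum.inr 0))

/-- The bilinear form of `U³ ⊕ E₈(-1)²` on `ℤ^22`. -/
def bM (x y : IdxM → ℤ) : ℤ :=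
  (∑ u : Fin 3,
    (x (Sum.inl (u, 0)) * y (Sum.inl (u, 1)) +
      x (Sum.inl (u, 1)) * y (Sum.inl (u, 0))))
  - (∑ c : Fin 2, ∑ i : Fin 8, ∑ j : Fin 8,
      E8Gram i j * x (Sum.inr (c, i)) * y (Sum.inr (c, j)))

set_option maxHeartbeats 1000000

abbrev VL := IdxL → ℤ
abbrev VM := IdxM → ℤ

noncomputable section StmtAux

namespace StmtAux

def Gfun (i j : Fin 8) : ℤ :=
  if i = j then 2
  else if (i = 0 ∧ j = 2) ∨ (i = 2 ∧ j = 0) ∨ (i = 1 ∧ j = 3) ∨ (i = 3 ∧ j = 1)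
    ∨ (i = 2 ∧ j = 3) ∨ (i = 3 ∧ j = 2) ∨ (i = 3 ∧ j = 4) ∨ (i = 4 ∧ j = 3)
    ∨ (i = 4 ∧ j = 5) ∨ (i = 5 ∧ j = 4) ∨ (i = 5 ∧ j = 6) ∨ (i = 6 ∧ j = 5)
    ∨ (i = 6 ∧ j = 7) ∨ (i = 7 ∧ j = 6) then -1 else 0

lemma E8Gram_eq : ∀ i j, E8Gram i j = Gfun i j := by
  intro i j; fin_cases i <;> fin_cases j <;> rfl

lemma E8Gram_symm : ∀ i j, E8Gram i j = E8Gram j i := by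
  intro i j; fin_cases i <;> fin_cases j <;> rfl

/-! ### Bilinearity -/

lemma bL_add_left (x y z : VL) : bL (x + y) z = bL x z + bL y z := by
  simp only [bL, Pi.add_apply, add_mul, mul_add, Finset.sum_add_distrib]
  ring

lemma bL_add_right (x y z : VL) : bL x (y + z) = bL x y + bL x z := by
  simp only [bL, Pi.add_apply, add_mul, mul_add, Finset.sum_add_distrib]
  ring

lemma bL_smul_left (c : ℤ) (x y : VL) : bL (c • x) y = c * bL x y := by
  simp only [bL, Pi.smul_apply, smul_eq_mul, mul_sub, Finset.mul_sum, mul_add]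
  congr 1
  congr 1
  · exact Finset.sum_congr rfl fun u _ => by ring
  · exact Finset.sum_congr rfl fun a _ => Finset.sum_congr rfl fun i _ =>
      Finset.sum_congr rfl fun j _ => by ring
  · ring

lemma bL_smul_right (c : ℤ) (x y : VL) : bL x (c • y) = c * bL x y := by
  simp only [bL, Pi.smul_apply, smul_eq_mul, mul_sub, Finset.mul_sum, mul_add]
  congr 1
  congr 1
  · exact Finset.sum_congr rfl fun u _ => by ring
  · exact Finset.sum_congr rfl fun a _ => Finset.sum_congr rfl fun i _ =>
      Finset.sum_congr rfl fun j _ => by ring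
  · ring

lemma bL_symm (x y : VL) : bL x y = bL y x := by
  simp only [bL]
  congr 1
  · congr 1
    · exact Finset.sum_congr rfl fun u _ => by ring
    · exact Finset.sum_congr rfl fun a _ => by
        rw [Finset.sum_comm]
        exact Finset.sum_congr rfl fun i _ => Finset.sum_congr rfl fun j _ => by
          rw [E8Gram_symm i j]; ring
  · ring

lemma bM_add_left (x y z : VM) : bM (x + y) z = bM x z + bM y z := by
  simp only [bM, Pi.add_apply, add_mul, mul_add, Finset.sum_add_distrib]
  ring

lemma bM_add_right (x y z : VM) : bM x (y + z) = bM x y + bM x z := by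
  simp only [bM, Pi.add_apply, add_mul, mul_add, Finset.sum_add_distrib]
  ring

lemma bM_smul_left (c : ℤ) (x y : VM) : bM (c • x) y = c * bM x y := by
  simp only [bM, Pi.smul_apply, smul_eq_mul, mul_sub, Finset.mul_sum, mul_add]
  congr 1
  · exact Finset.sum_congr rfl fun u _ => by ring
  · exact Finset.sum_congr rfl fun a _ => Finset.sum_congr rfl fun i _ =>
      Finset.sum_congr rfl fun j _ => by ring

lemma bM_smul_right (c : ℤ) (x y : VM) : bM x (c • y) = c * bM x y := by
  simp only [bM, Pi.smul_apply, smul_eq_mul, mul_sub, Finset.mul_sum, mul_add]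
  congr 1
  · exact Finset.sum_congr rfl fun u _ => by ring
  · exact Finset.sum_congr rfl fun a _ => Finset.sum_congr rfl fun i _ =>
      Finset.sum_congr rfl fun j _ => by ring

lemma bM_symm (x y : VM) : bM x y = bM y x := by
  simp only [bM]
  congr 1
  · exact Finset.sum_congr rfl fun u _ => by ring
  · exact Finset.sum_congr rfl fun a _ => by
      rw [Finset.sum_comm]
      exact Finset.sum_congr rfl fun i _ => Finset.sum_congr rfl fun j _ => by
        rw [E8Gram_symm i j]; ring

end StmtAux

namespace StmtAux

/-! ### Embedding of `M` into `L`, basis vectors -/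

def emb (z : VM) : VL :=
  Sum.elim (fun p => z (Sum.inl p)) (Sum.elim (fun q => z (Sum.inr q)) (fun _ => 0))

def vv : VL := Sum.elim (fun _ => 0) (Sum.elim (fun _ => 0) (fun _ => 1))

def vidx : IdxL := Sum.inr (Sum.inr 0)

def restr (x : VL) : VM := fun j => x (Sum.map id Sum.inl j)

lemma bL_emb_emb (z w : VM) : bL (emb z) (emb w) = bM z w := by
  simp [bL, bM, emb]

lemma bL_emb_v (z : VM) : bL (emb z) vv = 0 := by simp [bL, emb, vv]

lemma bL_v_emb (z : VM) : bL vv (emb z) = 0 := by simp [bL, emb, vv]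

lemma bL_v_v : bL vv vv = -2 := by simp [bL, vv]

lemma bL_restr (x : VL) (z : VM) : bL x (emb z) = bM (restr x) z := by
  simp [bL, bM, emb, restr]

lemma emb_add (a b : VM) : emb (a + b) = emb a + emb b := by
  funext i; rcases i with p | q | k <;> simp [emb]

lemma emb_smul (c : ℤ) (a : VM) : emb (c • a) = c • emb a := by
  funext i; rcases i with p | q | k <;> simp [emb]

def iU (p : Fin 3) (q : Fin 2) : IdxM := Sum.inl (p, q)

def bv (j : IdxM) : VM := fun i => if i = j then 1 else 0

def Hmat : Matrix (Fin 8) (Fin 8) ℤ :=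
  !![4, 5, 7, 10, 8, 6, 4, 2;
     5, 8, 10, 15, 12, 9, 6, 3;
     7, 10, 14, 20, 16, 12, 8, 4;
     10, 15, 20, 30, 24, 18, 12, 6;
     8, 12, 16, 24, 20, 15, 10, 5;
     6, 9, 12, 18, 15, 12, 8, 4;
     4, 6, 8, 12, 10, 8, 6, 3;
     2, 3, 4, 6, 5, 4, 3, 2]

def zdual (c : Fin 2) (k : Fin 8) : VM :=
  Sum.elim (fun _ => 0) (fun q => if q.1 = c then -(Hmat k q.2) else 0)

lemma HG : ∀ k j, (∑ i, Hmat k i * E8Gram i j) = if k = j then 1 else 0 := by decide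

lemma Hdiag_even : ∀ k : Fin 8, Hmat k k = 2 * (Hmat k k / 2) := by decide

lemma ev_bv0 (p : Fin 3) (m : VM) : bM (bv (iU p 0)) m = m (iU p 1) := by
  fin_cases p <;> simp [bM, bv, iU, Fin.sum_univ_succ]

lemma ev_bv1 (p : Fin 3) (m : VM) : bM (bv (iU p 1)) m = m (iU p 0) := by
  fin_cases p <;> simp [bM, bv, iU, Fin.sum_univ_succ]

lemma ev_zd (c : Fin 2) (k : Fin 8) (m : VM) : bM (zdual c k) m = m (Sum.inr (c, k)) := by
  have key : ∀ c' : Fin 2,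
      (∑ i, ∑ j, E8Gram i j * zdual c k (Sum.inr (c', i)) * m (Sum.inr (c', j)))
        = if c' = c then -(m (Sum.inr (c, k))) else 0 := by
    intro c'
    by_cases h : c' = c
    · subst h
      have hz : ∀ i : Fin 8, zdual c' k (Sum.inr (c', i)) = -(Hmat k i) := by
        intro i; simp [zdual]
      rw [Finset.sum_congr rfl fun i _ => Finset.sum_congr rfl fun j _ => by rw [hz i]]
      rw [Finset.sum_comm, if_pos rfl]
      have hstep : ∀ j, (∑ i, E8Gram i j * -(Hmat k i) * m (Sum.inr (c', j)))
          = -((if k = j then 1 else 0) * m (Sum.inr (c', j))) := by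
        intro j
        rw [← HG k j, Finset.sum_mul, ← Finset.sum_neg_distrib]
        exact Finset.sum_congr rfl fun i _ => by ring
      rw [Finset.sum_congr rfl fun j _ => hstep j]
      simp
    · rw [if_neg h]
      apply Finset.sum_eq_zero; intro i _
      apply Finset.sum_eq_zero; intro j _
      simp [zdual, h]
  have hU : (∑ u : Fin 3, (zdual c k (Sum.inl (u, 0)) * m (Sum.inl (u, 1)) +
      zdual c k (Sum.inl (u, 1)) * m (Sum.inl (u, 0)))) = 0 := by
    simp [zdual]
  simp only [bM]
  rw [hU, Finset.sum_congr rfl fun c' _ => key c']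
  simp [Finset.sum_ite_eq']

def qE8 (f : Fin 8 → ℤ) : ℤ :=
  f 0 ^ 2 + f 1 ^ 2 + f 2 ^ 2 + f 3 ^ 2 + f 4 ^ 2 + f 5 ^ 2 + f 6 ^ 2 + f 7 ^ 2
  - f 0 * f 2 - f 1 * f 3 - f 2 * f 3 - f 3 * f 4 - f 4 * f 5 - f 5 * f 6 - f 6 * f 7

lemma bM_self_expand (x : VM) : bM x x =
    2 * (x (iU 0 0) * x (iU 0 1) + x (iU 1 0) * x (iU 1 1) + x (iU 2 0) * x (iU 2 1))
    - 2 * qE8 (fun i => x (Sum.inr (0, i))) - 2 * qE8 (fun i => x (Sum.inr (1, i))) := by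
  simp [bM, qE8, iU, E8Gram_eq, Gfun, Fin.sum_univ_eight, Fin.sum_univ_three,
    Fin.sum_univ_two]
  ring

lemma bM_even (x : VM) : ∃ s, bM x x = 2 * s := by
  refine ⟨(x (iU 0 0) * x (iU 0 1) + x (iU 1 0) * x (iU 1 1) + x (iU 2 0) * x (iU 2 1))
    - qE8 (fun i => x (Sum.inr (0, i))) - qE8 (fun i => x (Sum.inr (1, i))), ?_⟩
  rw [bM_self_expand]; ring

lemma qE8_mul (g : ℤ) (f : Fin 8 → ℤ) : qE8 (fun i => g * f i) = g ^ 2 * qE8 f := by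
  simp [qE8]; ring

end StmtAux

namespace StmtAux

/-! ### Transvections -/

section TV
variable (f x : VL) (s : ℤ)

def tvFun (y : VL) : VL := y + (bL f y) • x + (-(bL x y) - s * bL f y) • f
def tvInv (y : VL) : VL := y + (-(bL f y)) • x + ((bL x y) - s * bL f y) • f

variable (hf : bL f f = 0) (hfx : bL f x = 0) (hx : bL x x = 2 * s)

include hf hfx hx

lemma tv_left_inv : ∀ y, tvInv f x s (tvFun f x s y) = y := by
  intro y
  have hxf : bL x f = 0 := by rw [bL_symm]; exact hfx
  simp only [tvFun, tvInv, bL_add_right, bL_smul_right, hf, hfx, hxf, hx]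
  module

lemma tv_right_inv : ∀ y, tvFun f x s (tvInv f x s y) = y := by
  intro y
  have hxf : bL x f = 0 := by rw [bL_symm]; exact hfx
  simp only [tvFun, tvInv, bL_add_right, bL_smul_right, hf, hfx, hxf, hx]
  module

def tv : VL ≃ₗ[ℤ] VL where
  toFun := tvFun f x s
  invFun := tvInv f x s
  map_add' a b := by
    simp only [tvFun, bL_add_right]
    module
  map_smul' c a := by
    simp only [tvFun, bL_smul_right, smul_eq_mul, RingHom.id_apply]
    module
  left_inv := tv_left_inv f x s hf hfx hx
  right_inv := tv_right_inv f x s hf hfx hx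

lemma tv_apply (y : VL) :
    tv f x s hf hfx hx y = y + (bL f y) • x + (-(bL x y) - s * bL f y) • f := rfl

lemma tv_isom (y z : VL) :
    bL (tv f x s hf hfx hx y) (tv f x s hf hfx hx z) = bL y z := by
  have hxf : bL x f = 0 := by rw [bL_symm]; exact hfx
  simp only [tv_apply, bL_add_left, bL_add_right, bL_smul_left, bL_smul_right,
    hf, hfx, hxf, hx]
  have h1 : bL x y = bL y x := bL_symm _ _
  have h2 : bL f y = bL y f := bL_symm _ _
  rw [← h1, ← h2]
  ring

end TV

/-! ### Reachability -/

def Reach (e e' : VL) : Prop :=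
  ∃ g : VL ≃ₗ[ℤ] VL, (∀ a b : VL, bL (g a) (g b) = bL a b) ∧ g e = e'

lemma reach_refl (e : VL) : Reach e e := ⟨LinearEquiv.refl ℤ VL, fun _ _ => rfl, rfl⟩

lemma reach_trans {e e' e'' : VL} (h1 : Reach e e') (h2 : Reach e' e'') : Reach e e'' := by
  obtain ⟨g1, hi1, hg1⟩ := h1
  obtain ⟨g2, hi2, hg2⟩ := h2
  exact ⟨g1.trans g2, fun a b => by simp [LinearEquiv.trans_apply, hi2, hi1],
    by simp [LinearEquiv.trans_apply, hg1, hg2]⟩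

lemma reach_symm {e e' : VL} (h : Reach e e') : Reach e' e := by
  obtain ⟨g, hi, hg⟩ := h
  refine ⟨g.symm, fun a b => ?_, by rw [← hg]; exact g.symm_apply_apply e⟩
  have h2 := hi (g.symm a) (g.symm b)
  rw [g.apply_symm_apply, g.apply_symm_apply] at h2
  exact h2.symm

lemma reach_tv (e : VL) (f x : VL) (s : ℤ) (hf : bL f f = 0) (hfx : bL f x = 0)
    (hx : bL x x = 2 * s) :
    Reach e (e + (bL f e) • x + (-(bL x e) - s * bL f e) • f) :=
  ⟨tv f x s hf hfx hx, tv_isom f x s hf hfx hx, rfl⟩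

lemma reach_he2 {e e' : VL} (h : Reach e e') (he : bL e e = -2) : bL e' e' = -2 := by
  obtain ⟨g, hi, hg⟩ := h
  rw [← hg, hi]; exact he

lemma reach_div {e e' : VL} (h : Reach e e') (hd : ∀ x, (2:ℤ) ∣ bL e x) :
    ∀ x, (2:ℤ) ∣ bL e' x := by
  obtain ⟨g, hi, hg⟩ := h
  intro x
  have : bL e' x = bL e (g.symm x) := by
    rw [← hg, ← hi e (g.symm x), g.apply_symm_apply]
  rw [this]; exact hd _

/-! ### M-level reachability -/

def MReach (m m' : VM) : Prop :=
  ∀ c : ℤ, Reach ((2:ℤ) • emb m + c • vv) ((2:ℤ) • emb m' + c • vv)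

lemma mreach_refl (m : VM) : MReach m m := fun _ => reach_refl _

lemma mreach_trans {m m' m'' : VM} (h1 : MReach m m') (h2 : MReach m' m'') :
    MReach m m'' := fun c => reach_trans (h1 c) (h2 c)

lemma bL_comb (m m' : VM) (c c' : ℤ) :
    bL ((2:ℤ) • emb m + c • vv) ((2:ℤ) • emb m' + c' • vv)
      = 4 * bM m m' - 2 * (c * c') := by
  simp only [bL_add_left, bL_add_right, bL_smul_left, bL_smul_right,
    bL_emb_emb, bL_emb_v, bL_v_emb, bL_v_v]
  ring

lemma mreach_bM_inv {m m' : VM} (h : MReach m m') : bM m' m' = bM m m := by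
  obtain ⟨g, hi, hg⟩ := h 0
  have h1 : bL ((2:ℤ) • emb m' + (0:ℤ) • vv) ((2:ℤ) • emb m' + (0:ℤ) • vv)
      = bL ((2:ℤ) • emb m + (0:ℤ) • vv) ((2:ℤ) • emb m + (0:ℤ) • vv) := by
    rw [← hg, hi]
  rw [bL_comb, bL_comb] at h1
  linarith

lemma mreach_tv (m f x : VM) (hf : bM f f = 0) (hfx : bM f x = 0) (s : ℤ)
    (hx : bM x x = 2 * s) :
    MReach m (m + (bM f m) • x + (-(bM x m) - s * bM f m) • f) := by
  intro c
  have hf' : bL (emb f) (emb f) = 0 := by rw [bL_emb_emb]; exact hf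
  have hfx' : bL (emb f) (emb x) = 0 := by rw [bL_emb_emb]; exact hfx
  have hx' : bL (emb x) (emb x) = 2 * s := by rw [bL_emb_emb]; exact hx
  have h1 : bL (emb f) ((2:ℤ) • emb m + c • vv) = 2 * bM f m := by
    rw [bL_add_right, bL_smul_right, bL_smul_right, bL_emb_emb, bL_emb_v]; ring
  have h2 : bL (emb x) ((2:ℤ) • emb m + c • vv) = 2 * bM x m := by
    rw [bL_add_right, bL_smul_right, bL_smul_right, bL_emb_emb, bL_emb_v]; ring
  refine ⟨tv (emb f) (emb x) s hf' hfx' hx', tv_isom _ _ _ _ _ _, ?_⟩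
  rw [tv_apply, h1, h2, emb_add, emb_add, emb_smul, emb_smul]
  module

end StmtAux

namespace StmtAux

/-! ### The swap isometry (u0 ↔ u1 in the first hyperbolic plane) -/

def swapP (p : Fin 3 × Fin 2) : Fin 3 × Fin 2 :=
  if p = (0, 0) then (0, 1) else if p = (0, 1) then (0, 0) else p

lemma swapP_invol : ∀ p : Fin 3 × Fin 2, swapP (swapP p) = p := by decide

def swapIdxL : IdxL → IdxL := Sum.elim (fun p => Sum.inl (swapP p)) (fun q => Sum.inr q)

def swapIdxM : IdxM → IdxM := Sum.elim (fun p => Sum.inl (swapP p)) (fun q => Sum.inr q)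

def swapM (m : VM) : VM := fun j => m (swapIdxM j)

lemma swapIdxL_invol (i : IdxL) : swapIdxL (swapIdxL i) = i := by
  rcases i with p | q
  · simp [swapIdxL, swapP_invol p]
  · simp [swapIdxL]

def gswapFun (x : VL) : VL := fun i => x (swapIdxL i)

def gswap : VL ≃ₗ[ℤ] VL where
  toFun := gswapFun
  invFun := gswapFun
  map_add' a b := rfl
  map_smul' c a := rfl
  left_inv x := by funext i; simp [gswapFun, swapIdxL_invol]
  right_inv x := by funext i; simp [gswapFun, swapIdxL_invol]

lemma swapP_vals : swapP (0,0) = ((0:Fin 3),(1:Fin 2)) ∧ swapP (0,1) = ((0:Fin 3),(0:Fin 2))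
    ∧ swapP (1,0) = ((1:Fin 3),(0:Fin 2)) ∧ swapP (1,1) = ((1:Fin 3),(1:Fin 2))
    ∧ swapP (2,0) = ((2:Fin 3),(0:Fin 2)) ∧ swapP (2,1) = ((2:Fin 3),(1:Fin 2)) := by
  refine ⟨by decide, by decide, by decide, by decide, by decide, by decide⟩

lemma gswap_isom (x y : VL) : bL (gswap x) (gswap y) = bL x y := by
  show bL (gswapFun x) (gswapFun y) = bL x y
  simp only [bL, gswapFun, swapIdxL, Sum.elim_inr, Sum.elim_inl,
    Fin.sum_univ_three]
  rw [swapP_vals.1, swapP_vals.2.1, swapP_vals.2.2.1, swapP_vals.2.2.2.1,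
    swapP_vals.2.2.2.2.1, swapP_vals.2.2.2.2.2]
  ring

lemma gswap_comb (m : VM) (c : ℤ) :
    gswap ((2:ℤ) • emb m + c • vv) = (2:ℤ) • emb (swapM m) + c • vv := by
  funext i
  show ((2:ℤ) • emb m + c • vv) (swapIdxL i) = ((2:ℤ) • emb (swapM m) + c • vv) i
  rcases i with p | q | k <;>
    simp [swapIdxL, emb, vv, swapM, swapIdxM]

lemma mreach_swap (m : VM) : MReach m (swapM m) := by
  intro c
  exact ⟨gswap, gswap_isom, gswap_comb m c⟩

lemma swapM_00 (m : VM) : swapM m (iU 0 0) = m (iU 0 1) := by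
  simp [swapM, swapIdxM, iU, swapP]

lemma swapM_01 (m : VM) : swapM m (iU 0 1) = m (iU 0 0) := by
  have : swapP (0,1) = ((0:Fin 3),(0:Fin 2)) := by decide
  simp [swapM, swapIdxM, iU, swapP]

/-! ### Negation of the `v` coordinate -/

def gnegFun (x : VL) : VL :=
  Sum.elim (fun p => x (Sum.inl p))
    (Sum.elim (fun q => x (Sum.inr (Sum.inl q))) (fun k => -(x (Sum.inr (Sum.inr k)))))

def gneg : VL ≃ₗ[ℤ] VL where
  toFun := gnegFun
  invFun := gnegFun
  map_add' a b := by funext i; rcases i with p | q | k <;> simp [gnegFun] <;> ring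
  map_smul' c a := by funext i; rcases i with p | q | k <;> simp [gnegFun] <;> ring
  left_inv x := by funext i; rcases i with p | q | k <;> simp [gnegFun]
  right_inv x := by funext i; rcases i with p | q | k <;> simp [gnegFun]

lemma gneg_isom (x y : VL) : bL (gneg x) (gneg y) = bL x y := by
  show bL (gnegFun x) (gnegFun y) = bL x y
  simp only [bL, gnegFun, Sum.elim_inl, Sum.elim_inr]
  ring

lemma gneg_comb (m : VM) (c : ℤ) :
    gneg ((2:ℤ) • emb m + c • vv) = (2:ℤ) • emb m + (-c) • vv := by
  funext i
  show gnegFun ((2:ℤ) • emb m + c • vv) i = ((2:ℤ) • emb m + (-c) • vv) i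
  rcases i with p | q | k <;> simp [gnegFun, emb, vv]

lemma reach_vneg (m : VM) (c : ℤ) :
    Reach ((2:ℤ) • emb m + c • vv) ((2:ℤ) • emb m + (-c) • vv) :=
  ⟨gneg, gneg_isom, gneg_comb m c⟩

end StmtAux

namespace StmtAux

/-! ### Integer helpers -/

lemma helper_res (c β : ℤ) (hβ : β ≠ 0) :
    ∃ lam c' : ℤ, c' = c + 2 * lam * β ∧ c'.natAbs ≤ β.natAbs := by
  have hM : (0:ℤ) < 2 * (β.natAbs : ℤ) := by
    have : 0 < (β.natAbs : ℤ) := by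
      have := Int.natAbs_pos.mpr hβ; exact_mod_cast this
    linarith
  set M : ℤ := 2 * (β.natAbs : ℤ) with hMdef
  set r : ℤ := c % M with hrdef
  have hr0 : 0 ≤ r := Int.emod_nonneg c (by omega)
  have hrM : r < M := Int.emod_lt_of_pos c hM
  have hdvd : M ∣ (c - r) := Int.dvd_self_sub_of_emod_eq rfl
  have hβM : (2 * β) ∣ M ∧ M ∣ (2 * β) := by
    rcases Int.natAbs_eq β with h | h
    · constructor <;> [exact ⟨1, by rw [hMdef]; omega⟩; exact ⟨1, by rw [hMdef]; omega⟩]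
    · constructor <;> [exact ⟨-1, by rw [hMdef]; omega⟩; exact ⟨-1, by rw [hMdef]; omega⟩]
  by_cases hle : r ≤ (β.natAbs : ℤ)
  · obtain ⟨t, ht⟩ := dvd_trans hβM.1 hdvd
    refine ⟨-t, r, by linarith [ht], ?_⟩
    omega
  · obtain ⟨t, ht⟩ : (2*β) ∣ (c - (r - M)) := by
      have h1 : c - (r - M) = (c - r) + M := by ring
      rw [h1]
      exact dvd_add (dvd_trans hβM.1 hdvd) hβM.1
    refine ⟨-t, r - M, by linarith, ?_⟩
    omega

lemma helper_res2 (B ρ : ℤ) (hρ : ρ ≠ 0) :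
    ∃ lam B' : ℤ, B' = B - lam * ρ ∧ 0 < B'.natAbs ∧ B'.natAbs ≤ ρ.natAbs := by
  have hM : (0:ℤ) < (ρ.natAbs : ℤ) := by
    have := Int.natAbs_pos.mpr hρ; exact_mod_cast this
  set M : ℤ := (ρ.natAbs : ℤ) with hMdef
  set r : ℤ := B % M with hrdef
  have hr0 : 0 ≤ r := Int.emod_nonneg B (by omega)
  have hrM : r < M := Int.emod_lt_of_pos B hM
  have hdvd : M ∣ (B - r) := Int.dvd_self_sub_of_emod_eq rfl
  have hρM : M ∣ ρ ∧ ρ ∣ M := by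
    rcases Int.natAbs_eq ρ with h | h
    · exact ⟨⟨1, by omega⟩, ⟨1, by omega⟩⟩
    · exact ⟨⟨-1, by omega⟩, ⟨-1, by omega⟩⟩
  by_cases hr : r = 0
  · -- ρ divides B; take B' = ρ
    obtain ⟨t, ht⟩ : ρ ∣ B := dvd_trans hρM.2 (by rw [← sub_zero B, ← hr]; exact hdvd)
    refine ⟨t - 1, ρ, by rw [ht]; ring, by omega, le_refl _⟩
  · obtain ⟨t, ht⟩ : ρ ∣ (B - r) := dvd_trans hρM.2 hdvd
    refine ⟨t, r, by linarith, by omega, by omega⟩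

lemma natAbs_lt_of_sq_lt {a b : ℤ} (h : a * a < b * b) : a.natAbs < b.natAbs := by
  have h1 : ((a.natAbs * a.natAbs : ℕ) : ℤ) < ((b.natAbs * b.natAbs : ℕ) : ℤ) := by
    rw [Int.natAbs_mul_self, Int.natAbs_mul_self]; exact h
  exact Nat.mul_self_lt_mul_self_iff.mp (by exact_mod_cast h1)

/-! ### Decomposition of a divisibility-2 vector -/

def mOf (e : VL) : VM := fun j => restr e j / 2

lemma even_coords (e : VL) (hd : ∀ x : VL, (2:ℤ) ∣ bL e x) :
    ∀ j : IdxM, (2:ℤ) ∣ restr e j := by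
  intro j
  rcases j with ⟨p, q⟩ | ⟨c, k⟩
  · fin_cases q
    · have := hd (emb (bv (iU p 1)))
      rw [bL_restr, bM_symm, ev_bv1] at this
      exact this
    · have := hd (emb (bv (iU p 0)))
      rw [bL_restr, bM_symm, ev_bv0] at this
      exact this
  · have := hd (emb (zdual c k))
    rw [bL_restr, bM_symm, ev_zd] at this
    exact this

lemma decomp (e : VL) (hd : ∀ x : VL, (2:ℤ) ∣ bL e x) :
    e = (2:ℤ) • emb (mOf e) + (e vidx) • vv := by
  funext i
  have h2 : ∀ j : IdxM, 2 * (restr e j / 2) = restr e j :=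
    fun j => Int.mul_ediv_cancel' (even_coords e hd j)
  rcases i with p | q | k
  · show e (Sum.inl p) = 2 * emb (mOf e) (Sum.inl p) + e vidx * vv (Sum.inl p)
    have := h2 (Sum.inl p)
    simp only [emb, Sum.elim_inl, mOf, vv]
    simpa [restr] using this.symm
  · show e (Sum.inr (Sum.inl q)) = 2 * emb (mOf e) (Sum.inr (Sum.inl q))
      + e vidx * vv (Sum.inr (Sum.inl q))
    have := h2 (Sum.inr q)
    simp only [emb, Sum.elim_inr, mOf, vv]
    simpa [restr] using this.symm
  · show e (Sum.inr (Sum.inr k)) = 2 * emb (mOf e) (Sum.inr (Sum.inr k))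
      + e vidx * vv (Sum.inr (Sum.inr k))
    have hk : k = 0 := Subsingleton.elim k 0
    subst hk
    simp [emb, vv, vidx]

lemma comb_vidx (m : VM) (c : ℤ) : ((2:ℤ) • emb m + c • vv) vidx = c := by
  simp [emb, vv, vidx]

end StmtAux

namespace StmtAux

lemma bL_emb_comb (z m : VM) (c : ℤ) :
    bL (emb z) ((2:ℤ) • emb m + c • vv) = 2 * bM z m := by
  rw [bL_add_right, bL_smul_right, bL_smul_right, bL_emb_emb, bL_emb_v]; ring

lemma bL_v_comb (m : VM) (c : ℤ) :
    bL vv ((2:ℤ) • emb m + c • vv) = -2 * c := by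
  rw [bL_add_right, bL_smul_right, bL_smul_right, bL_v_emb, bL_v_v]; ring

/-! ### Endgame: c = 1 -/

lemma endgame (m : VM) (hm : bM m m = 0) :
    Reach ((2:ℤ) • emb m + (1:ℤ) • vv) vv := by
  have hf : bL (emb m) (emb m) = 0 := by rw [bL_emb_emb]; exact hm
  have hfx : bL (emb m) ((-1:ℤ) • vv) = 0 := by rw [bL_smul_right, bL_emb_v]; ring
  have hx : bL ((-1:ℤ) • vv) ((-1:ℤ) • vv) = 2 * (-1) := by
    rw [bL_smul_left, bL_smul_right, bL_v_v]; ring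
  have h := reach_tv ((2:ℤ) • emb m + (1:ℤ) • vv) (emb m) ((-1:ℤ) • vv) (-1) hf hfx hx
  have h1 : bL (emb m) ((2:ℤ) • emb m + (1:ℤ) • vv) = 0 := by
    rw [bL_emb_comb, hm]; ring
  have h2 : bL ((-1:ℤ) • vv) ((2:ℤ) • emb m + (1:ℤ) • vv) = 2 := by
    rw [bL_smul_left, bL_v_comb]; ring
  rw [h1, h2] at h
  have h3 : (2:ℤ) • emb m + (1:ℤ) • vv + (0:ℤ) • ((-1:ℤ) • vv)
      + (-(2:ℤ) - (-1) * 0) • emb m = vv := by module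
  rwa [h3] at h

/-! ### Coupling: using a hyperbolic coefficient to shrink `c` -/

lemma coupling_gen (m : VM) (c β : ℤ) (w : VM) (hw : bM w w = 0)
    (hval : bM w m = β) (hβ : β ≠ 0) :
    ∃ (m' : VM) (c' : ℤ), Reach ((2:ℤ) • emb m + c • vv) ((2:ℤ) • emb m' + c' • vv)
      ∧ c'.natAbs ≤ β.natAbs := by
  obtain ⟨lam, c', hc', hle⟩ := helper_res c β hβ
  have hf : bL (emb w) (emb w) = 0 := by rw [bL_emb_emb]; exact hw
  have hfx : bL (emb w) (lam • vv) = 0 := by rw [bL_smul_right, bL_emb_v]; ring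
  have hx : bL (lam • vv) (lam • vv) = 2 * (-(lam^2)) := by
    rw [bL_smul_left, bL_smul_right, bL_v_v]; ring
  have h := reach_tv ((2:ℤ) • emb m + c • vv) (emb w) (lam • vv) (-(lam^2)) hf hfx hx
  have h1 : bL (emb w) ((2:ℤ) • emb m + c • vv) = 2 * β := by
    rw [bL_emb_comb, hval]
  have h2 : bL (lam • vv) ((2:ℤ) • emb m + c • vv) = -2 * lam * c := by
    rw [bL_smul_left, bL_v_comb]; ring
  rw [h1, h2] at h
  refine ⟨m + (lam * c + lam^2 * β) • w, c', ?_, hle⟩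
  have h3 : (2:ℤ) • emb m + c • vv + (2 * β) • (lam • vv)
      + (-(-2 * lam * c) - -lam ^ 2 * (2 * β)) • emb w
      = (2:ℤ) • emb (m + (lam * c + lam^2 * β) • w) + c' • vv := by
    rw [emb_add, emb_smul, hc']
    module
  rwa [h3] at h

/-! ### One Euclid step in the gather procedure -/

lemma step_reduce (m1 x2 : VM) (ρ : ℤ)
    (hx2A : x2 (iU 0 0) = 0) (hx2B : x2 (iU 0 1) = 0)
    (hiso : bM x2 x2 = 0) (hval : bM x2 m1 = ρ) (hρ : ρ ≠ 0) :
    ∃ m3, MReach m1 m3 ∧ (m3 (iU 0 0)).natAbs ≤ ρ.natAbs := by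
  obtain ⟨lam, B', hB', _, hle⟩ := helper_res2 (m1 (iU 0 1)) ρ hρ
  have hff : bM (bv (iU 0 1)) (bv (iU 0 1)) = 0 := by
    rw [ev_bv1]; simp only [bv]; rw [if_neg (by decide)]
  have hfx : bM (bv (iU 0 1)) (lam • x2) = 0 := by
    rw [bM_smul_right, ev_bv1, hx2A]; ring
  have hxx : bM (lam • x2) (lam • x2) = 2 * 0 := by
    rw [bM_smul_left, bM_smul_right, hiso]; ring
  have h := mreach_tv m1 (bv (iU 0 1)) (lam • x2) hff hfx 0 hxx
  set m2 := m1 + bM (bv (iU 0 1)) m1 • (lam • x2)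
      + (-bM (lam • x2) m1 - 0 * bM (bv (iU 0 1)) m1) • bv (iU 0 1) with hm2
  refine ⟨swapM m2, mreach_trans h (mreach_swap m2), ?_⟩
  have hc1 : m2 (iU 0 1) = B' := by
    rw [hm2, hB']
    have hbm : bM (lam • x2) m1 = lam * ρ := by rw [bM_smul_left, hval]
    simp only [Pi.add_apply, Pi.smul_apply, smul_eq_mul, hbm, hx2B]
    have : bv (iU 0 1) (iU 0 1) = 1 := by simp [bv]
    rw [this]
    ring
  rw [swapM_00, hc1]
  exact hle

end StmtAux

namespace StmtAux

lemma emod_bounds (a A : ℤ) (hA : A ≠ 0) : 0 ≤ a % A ∧ a % A < (A.natAbs : ℤ) := by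
  refine ⟨Int.emod_nonneg a hA, ?_⟩
  rcases Int.natAbs_eq A with h | h
  · have hpos : 0 < A := by omega
    have := Int.emod_lt_of_pos a hpos
    omega
  · have hpos : 0 < (A.natAbs : ℤ) := by omega
    have hne : A = -(A.natAbs : ℤ) := h
    have h2 : a % A = a % (A.natAbs : ℤ) := by
      conv_lhs => rw [hne, Int.emod_neg]
    rw [h2]
    exact Int.emod_lt_of_pos a hpos

lemma bM_zero_left (m : VM) : bM 0 m = 0 := by
  have := bM_smul_left 0 0 m
  simpa using this

lemma gather (N : ℕ) : ∀ (c : ℤ) (m : VM),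
    (m (iU 0 0)).natAbs ≤ N → 2 * bM m m = c^2 - 1 → 3 ≤ c.natAbs →
    ∃ m', MReach m m' ∧
      ((m' (iU 0 1) ≠ 0 ∧ (m' (iU 0 1)).natAbs < c.natAbs) ∨
       (m' (iU 0 0) ≠ 0 ∧ (m' (iU 0 0)).natAbs < c.natAbs)) := by
  induction N using Nat.strong_induction_on with
  | _ N IH =>
  intro c m hAN hinv hc
  have hffb : bM (bv (iU 0 1)) (bv (iU 0 1)) = 0 := by
    rw [ev_bv1]; simp only [bv]; rw [if_neg (by decide)]
  have hcsq : c * c ≥ 9 := by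
    have h3 : (3:ℤ) ≤ (c.natAbs : ℤ) := by exact_mod_cast hc
    have habs : c * c = (c.natAbs : ℤ) * (c.natAbs : ℤ) := by
      rw [← Int.natAbs_mul_self]; push_cast; ring
    nlinarith
  by_cases hA0 : m (iU 0 0) = 0
  · -- A = 0
    by_cases hrest : ∀ j : IdxM, j ≠ iU 0 0 → j ≠ iU 0 1 → m j = 0
    · exfalso
      have h10 : m (iU 1 0) = 0 := hrest _ (by decide) (by decide)
      have h11 : m (iU 1 1) = 0 := hrest _ (by decide) (by decide)
      have h20 : m (iU 2 0) = 0 := hrest _ (by decide) (by decide)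
      have h21 : m (iU 2 1) = 0 := hrest _ (by decide) (by decide)
      have hq0 : qE8 (fun i => m (Sum.inr ((0:Fin 2), i))) = 0 := by
        have hz : ∀ i : Fin 8, m (Sum.inr ((0:Fin 2), i)) = 0 := fun i =>
          hrest _ (by simp [iU]) (by simp [iU])
        simp only [qE8, hz]; ring
      have hq1 : qE8 (fun i => m (Sum.inr ((1:Fin 2), i))) = 0 := by
        have hz : ∀ i : Fin 8, m (Sum.inr ((1:Fin 2), i)) = 0 := fun i =>
          hrest _ (by simp [iU]) (by simp [iU])
        simp only [qE8, hz]; ring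
      have hbm : bM m m = 0 := by
        rw [bM_self_expand, hA0, h10, h20, hq0, hq1]; ring
      rw [hbm] at hinv
      nlinarith
    · -- Bezout finish with A = 0
      push_neg at hrest
      obtain ⟨j0, hj1, hj2, hj0⟩ := hrest
      classical
      set S : Set ℤ := {m (iU 1 0), m (iU 1 1), m (iU 2 0), m (iU 2 1)}
        ∪ Set.range (fun ck : Fin 2 × Fin 8 => m (Sum.inr ck)) with hSdef
      set J : Ideal ℤ := Ideal.span S with hJdef
      obtain ⟨g0, hg0⟩ := (IsPrincipalIdealRing.principal J).principal
      have hdvd : ∀ t ∈ S, g0 ∣ t := by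
        intro t ht
        have : t ∈ J := Ideal.subset_span ht
        rw [hg0] at this
        exact Ideal.mem_span_singleton.mp this
      have hmem_j0 : m j0 ∈ S := by
        rcases j0 with ⟨p, q⟩ | ck
        · fin_cases p <;> fin_cases q
          · exact absurd rfl hj1
          · exact absurd rfl hj2
          · exact Or.inl (by simp [iU])
          · exact Or.inl (by simp [iU])
          · exact Or.inl (by simp [iU])
          · exact Or.inl (by simp [iU])
        · exact Or.inr ⟨ck, rfl⟩
      have hg0ne : g0 ≠ 0 := by
        intro h
        apply hj0
        have := hdvd _ hmem_j0
        rw [h] at this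
        exact zero_dvd_iff.mp this
      -- g0^2 divides bM m m
      have hsq : (g0 * g0) ∣ bM m m := by
        obtain ⟨aC, haC⟩ := hdvd _ (Or.inl (show m (iU 1 0) ∈ _ by simp))
        obtain ⟨aD, haD⟩ := hdvd _ (Or.inl (show m (iU 1 1) ∈ _ by simp))
        obtain ⟨aE, haE⟩ := hdvd _ (Or.inl (show m (iU 2 0) ∈ _ by simp))
        obtain ⟨aF, haF⟩ := hdvd _ (Or.inl (show m (iU 2 1) ∈ _ by simp))
        choose t ht using fun ck : Fin 2 × Fin 8 => hdvd _ (Or.inr ⟨ck, rfl⟩)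
        have e0 : (fun i => m (Sum.inr ((0:Fin 2), i))) = fun i => g0 * t (0, i) :=
          funext fun i => ht (0, i)
        have e1 : (fun i => m (Sum.inr ((1:Fin 2), i))) = fun i => g0 * t (1, i) :=
          funext fun i => ht (1, i)
        rw [bM_self_expand, hA0, haC, haD, haE, haF, e0, e1, qE8_mul, qE8_mul]
        exact ⟨2 * (aC * aD + aE * aF) - 2 * qE8 (fun i => t (0, i))
          - 2 * qE8 (fun i => t (1, i)), by ring⟩
      have hpos : 0 < bM m m := by nlinarith
      have hle : g0 * g0 ≤ bM m m := Int.le_of_dvd hpos hsq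
      have hltsq : g0 * g0 < c * c := by nlinarith
      have hglt : g0.natAbs < c.natAbs := natAbs_lt_of_sq_lt hltsq
      -- realization submodule
      set Rsub : Submodule ℤ ℤ :=
        { carrier := {t | ∃ x : VM, x (iU 0 0) = 0 ∧ bM x m = t}
          add_mem' := by
            rintro a b ⟨x, hx0, hxv⟩ ⟨y, hy0, hyv⟩
            exact ⟨x + y, by simp [hx0, hy0], by rw [bM_add_left, hxv, hyv]⟩
          zero_mem' := ⟨0, rfl, bM_zero_left m⟩
          smul_mem' := by
            rintro a t ⟨x, hx0, hxv⟩
            exact ⟨a • x, by simp [hx0], by rw [bM_smul_left, hxv]; simp⟩ } with hRdef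
      have hSsub : S ⊆ Rsub := by
        intro t ht
        rcases ht with h4 | ⟨ck, hck⟩
        · rcases h4 with h | h | h | h
          · exact h ▸ ⟨bv (iU 1 1), by simp only [bv]; rw [if_neg (by decide)],
              ev_bv1 1 m⟩
          · exact h ▸ ⟨bv (iU 1 0), by simp only [bv]; rw [if_neg (by decide)],
              ev_bv0 1 m⟩
          · exact h ▸ ⟨bv (iU 2 1), by simp only [bv]; rw [if_neg (by decide)],
              ev_bv1 2 m⟩
          · exact h ▸ ⟨bv (iU 2 0), by simp only [bv]; rw [if_neg (by decide)],
              ev_bv0 2 m⟩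
        · exact hck ▸ ⟨zdual ck.1 ck.2, rfl, ev_zd ck.1 ck.2 m⟩
      have hJsub : J ≤ Rsub := by
        rw [hJdef]
        exact Ideal.span_le.mpr hSsub
      obtain ⟨lam, B', hB', hB'pos, hB'le⟩ := helper_res2 (m (iU 0 1)) g0 hg0ne
      have hmemJ : m (iU 0 1) - B' ∈ J := by
        rw [hg0]
        exact Ideal.mem_span_singleton.mpr ⟨lam, by rw [hB']; ring⟩
      obtain ⟨x, hx0, hxv⟩ := hJsub hmemJ
      obtain ⟨s, hs⟩ := bM_even x
      have hfx : bM (bv (iU 0 1)) x = 0 := by rw [ev_bv1]; exact hx0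
      have h := mreach_tv m (bv (iU 0 1)) x hffb hfx s hs
      set m' := m + bM (bv (iU 0 1)) m • x
        + (-bM x m - s * bM (bv (iU 0 1)) m) • bv (iU 0 1) with hm'def
      refine ⟨m', h, Or.inl ⟨?_, ?_⟩⟩
      · have hcoord : m' (iU 0 1) = B' := by
          rw [hm'def]
          simp only [Pi.add_apply, Pi.smul_apply, smul_eq_mul]
          rw [ev_bv1, hA0, hxv]
          have hb1 : bv (iU 0 1) (iU 0 1) = 1 := by simp [bv]
          rw [hb1]
          ring
        rw [hcoord]
        omega
      · have hcoord : m' (iU 0 1) = B' := by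
          rw [hm'def]
          simp only [Pi.add_apply, Pi.smul_apply, smul_eq_mul]
          rw [ev_bv1, hA0, hxv]
          have hb1 : bv (iU 0 1) (iU 0 1) = 1 := by simp [bv]
          rw [hb1]
          ring
        rw [hcoord]
        omega
  · -- A ≠ 0 : first reduce the rest of the coordinates mod A
    set A := m (iU 0 0) with hAdef
    set x1 : VM := fun i => if i = iU 0 0 then 0 else if i = iU 0 1 then 0
      else -(m i / A) with hx1def
    obtain ⟨s1, hs1⟩ := bM_even x1
    have hfx1 : bM (bv (iU 0 1)) x1 = 0 := by
      rw [ev_bv1, hx1def]; simp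
    have h1 := mreach_tv m (bv (iU 0 1)) x1 hffb hfx1 s1 hs1
    set m1 := m + bM (bv (iU 0 1)) m • x1
      + (-bM x1 m - s1 * bM (bv (iU 0 1)) m) • bv (iU 0 1) with hm1def
    have hbv01_00 : bv (iU 0 1) (iU 0 0) = 0 := by
      simp only [bv]; rw [if_neg (by decide)]
    have hA1 : m1 (iU 0 0) = A := by
      rw [hm1def]
      simp only [Pi.add_apply, Pi.smul_apply, smul_eq_mul]
      rw [hbv01_00, hx1def]
      simp
      rfl
    have hrest1 : ∀ j : IdxM, j ≠ iU 0 0 → j ≠ iU 0 1 → m1 j = m j % A := by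
      intro j hj1 hj2
      rw [hm1def]
      simp only [Pi.add_apply, Pi.smul_apply, smul_eq_mul]
      have hx1j : x1 j = -(m j / A) := by
        rw [hx1def]; simp only; rw [if_neg hj1, if_neg hj2]
      have hbvj : bv (iU 0 1) j = 0 := by
        simp only [bv]; rw [if_neg hj2]
      rw [hx1j, hbvj, ev_bv1, ← hAdef, Int.emod_def]
      ring
    have hrest_bound : ∀ j : IdxM, j ≠ iU 0 0 → j ≠ iU 0 1 →
        0 ≤ m1 j ∧ m1 j < (A.natAbs : ℤ) := by
      intro j hj1 hj2
      rw [hrest1 j hj1 hj2]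
      exact emod_bounds (m j) A hA0
    have hANle : A.natAbs ≤ N := hAN
    -- helper that finishes from a pivot
    have finish_pivot : ∀ (x2 : VM) (ρ : ℤ), x2 (iU 0 0) = 0 → x2 (iU 0 1) = 0 →
        bM x2 x2 = 0 → bM x2 m1 = ρ → ρ ≠ 0 → ρ.natAbs < A.natAbs →
        ∃ m', MReach m m' ∧
          ((m' (iU 0 1) ≠ 0 ∧ (m' (iU 0 1)).natAbs < c.natAbs) ∨
           (m' (iU 0 0) ≠ 0 ∧ (m' (iU 0 0)).natAbs < c.natAbs)) := by
      intro x2 ρ p1 p2 p3 p4 p5 p6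
      obtain ⟨m3, hmr3, hle3⟩ := step_reduce m1 x2 ρ p1 p2 p3 p4 p5
      have hchain : MReach m m3 := mreach_trans h1 hmr3
      have hinv3 : 2 * bM m3 m3 = c^2 - 1 := by rw [mreach_bM_inv hchain]; exact hinv
      have hlt : (m3 (iU 0 0)).natAbs < N := by omega
      obtain ⟨m', hmr', good⟩ := IH _ hlt c m3 (le_refl _) hinv3 hc
      exact ⟨m', mreach_trans hchain hmr', good⟩
    by_cases h10 : m1 (iU 1 0) = 0
    · by_cases h11 : m1 (iU 1 1) = 0
      · by_cases h20 : m1 (iU 2 0) = 0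
        · by_cases h21 : m1 (iU 2 1) = 0
          · by_cases hxi : ∀ ck : Fin 2 × Fin 8, m1 (Sum.inr ck) = 0
            · -- all rest coordinates vanish : m1 = A·u0 + B1·u1
              set B1 := m1 (iU 0 1) with hB1def
              have hq0 : qE8 (fun i => m1 (Sum.inr ((0:Fin 2), i))) = 0 := by
                simp only [qE8, hxi]; ring
              have hq1 : qE8 (fun i => m1 (Sum.inr ((1:Fin 2), i))) = 0 := by
                simp only [qE8, hxi]; ring
              have hbm1 : bM m1 m1 = 2 * (A * B1) := by
                rw [bM_self_expand, hA1, h10, h20, hq0, hq1, ← hB1def]; ring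
              have hinv1 : 2 * bM m1 m1 = c^2 - 1 := by
                rw [mreach_bM_inv h1]; exact hinv
              have hkey : 4 * (A * B1) = c * c - 1 := by
                rw [hbm1] at hinv1; nlinarith [hinv1]
              have hB1ne : B1 ≠ 0 := by
                intro h
                rw [h] at hkey
                nlinarith
              by_cases hAc : A.natAbs < c.natAbs
              · refine ⟨m1, h1, Or.inr ⟨?_, ?_⟩⟩
                · rw [hA1]; exact hA0
                · rw [hA1]; exact hAc
              · -- |A| ≥ |c| forces |B1| < |c|
                refine ⟨m1, h1, Or.inl ⟨hB1ne, ?_⟩⟩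
                by_contra hBc
                push_neg at hBc
                have ha : (c.natAbs:ℤ) ≤ (A.natAbs:ℤ) := by exact_mod_cast not_lt.mp hAc
                have hb : (c.natAbs:ℤ) ≤ (B1.natAbs:ℤ) := by exact_mod_cast hBc
                have hc3 : (3:ℤ) ≤ (c.natAbs:ℤ) := by exact_mod_cast hc
                have hABpos : 0 < A * B1 := by nlinarith
                have habs2 : A * B1 = (A.natAbs:ℤ) * (B1.natAbs:ℤ) := by
                  have h4 : A * B1 = |A * B1| := (abs_of_pos hABpos).symm
                  rw [h4, Int.abs_eq_natAbs, Int.natAbs_mul]; push_cast; ring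
                have hcc : c * c = (c.natAbs:ℤ) * (c.natAbs:ℤ) := by
                  rw [← Int.natAbs_mul_self]; push_cast; ring
                have hmul : (c.natAbs:ℤ) * (c.natAbs:ℤ) ≤ (A.natAbs:ℤ) * (B1.natAbs:ℤ) :=
                  mul_le_mul ha hb (by positivity) (by positivity)
                nlinarith
            · push_neg at hxi
              obtain ⟨ck, hck⟩ := hxi
              set ρ := m1 (Sum.inr ck) with hρdef
              have hbnd := hrest_bound (Sum.inr ck) (by simp [iU]) (by simp [iU])
              have hρlt : ρ.natAbs < A.natAbs := by omega
              set qk : ℤ := Hmat ck.2 ck.2 / 2 with hqkdef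
              set x2 : VM := zdual ck.1 ck.2 + qk • bv (iU 1 0) + bv (iU 1 1) with hx2def
              have hzd00 : zdual ck.1 ck.2 (iU 0 0) = 0 := rfl
              have hzd01 : zdual ck.1 ck.2 (iU 0 1) = 0 := rfl
              have hp1 : x2 (iU 0 0) = 0 := by
                rw [hx2def]
                simp only [Pi.add_apply, Pi.smul_apply, smul_eq_mul, hzd00]
                simp only [bv]
                rw [if_neg (by decide), if_neg (by decide)]
                ring
              have hp2 : x2 (iU 0 1) = 0 := by
                rw [hx2def]
                simp only [Pi.add_apply, Pi.smul_apply, smul_eq_mul, hzd01]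
                simp only [bv]
                rw [if_neg (by decide), if_neg (by decide)]
                ring
              have hzd_bv10 : bM (zdual ck.1 ck.2) (bv (iU 1 0)) = 0 := by
                rw [ev_zd]; simp [bv, iU]
              have hzd_bv11 : bM (zdual ck.1 ck.2) (bv (iU 1 1)) = 0 := by
                rw [ev_zd]; simp [bv, iU]
              have hbv10_10 : bM (bv (iU 1 0)) (bv (iU 1 0)) = 0 := by
                rw [ev_bv0]; simp only [bv]; rw [if_neg (by decide)]
              have hbv11_11 : bM (bv (iU 1 1)) (bv (iU 1 1)) = 0 := by
                rw [ev_bv1]; simp only [bv]; rw [if_neg (by decide)]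
              have hbv10_11 : bM (bv (iU 1 0)) (bv (iU 1 1)) = 1 := by
                rw [ev_bv0]; simp [bv]
              have hbv11_10 : bM (bv (iU 1 1)) (bv (iU 1 0)) = 1 := by
                rw [ev_bv1]; simp [bv]
              have hzdzd : bM (zdual ck.1 ck.2) (zdual ck.1 ck.2) = -(Hmat ck.2 ck.2) := by
                rw [ev_zd]
                simp [zdual]
              have hbv10_zd : bM (bv (iU 1 0)) (zdual ck.1 ck.2) = 0 := by
                rw [bM_symm]; exact hzd_bv10
              have hbv11_zd : bM (bv (iU 1 1)) (zdual ck.1 ck.2) = 0 := by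
                rw [bM_symm]; exact hzd_bv11
              have hbv11_bv10' : bM (bv (iU 1 1)) (bv (iU 1 0)) = 1 := hbv11_10
              have hp3 : bM x2 x2 = 0 := by
                rw [hx2def]
                simp only [bM_add_left, bM_add_right, bM_smul_left, bM_smul_right]
                rw [hzdzd, hzd_bv10, hzd_bv11, hbv10_zd, hbv11_zd, hbv10_10,
                  hbv11_11, hbv10_11, hbv11_10]
                have h2qk : 2 * qk = Hmat ck.2 ck.2 := by
                  rw [hqkdef]; exact (Hdiag_even ck.2).symm
                linarith
              have hp4 : bM x2 m1 = ρ := by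
                rw [hx2def]
                simp only [bM_add_left, bM_smul_left]
                rw [ev_zd, ev_bv0, ev_bv1, h11, h10, hρdef]
                ring
              exact finish_pivot x2 ρ hp1 hp2 hp3 hp4 hck hρlt
          · -- pivot at iU 2 1 : partner bv (iU 2 0)
            have hbnd := hrest_bound (iU 2 1) (by decide) (by decide)
            have hρlt : (m1 (iU 2 1)).natAbs < A.natAbs := by omega
            refine finish_pivot (bv (iU 2 0)) (m1 (iU 2 1)) ?_ ?_ ?_ (ev_bv0 2 m1) h21 hρlt
            · simp only [bv]; rw [if_neg (by decide)]
            · simp only [bv]; rw [if_neg (by decide)]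
            · rw [ev_bv0]; simp only [bv]; rw [if_neg (by decide)]
        · -- pivot at iU 2 0 : partner bv (iU 2 1)
          have hbnd := hrest_bound (iU 2 0) (by decide) (by decide)
          have hρlt : (m1 (iU 2 0)).natAbs < A.natAbs := by omega
          refine finish_pivot (bv (iU 2 1)) (m1 (iU 2 0)) ?_ ?_ ?_ (ev_bv1 2 m1) h20 hρlt
          · simp only [bv]; rw [if_neg (by decide)]
          · simp only [bv]; rw [if_neg (by decide)]
          · rw [ev_bv1]; simp only [bv]; rw [if_neg (by decide)]
      · -- pivot at iU 1 1 : partner bv (iU 1 0)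
        have hbnd := hrest_bound (iU 1 1) (by decide) (by decide)
        have hρlt : (m1 (iU 1 1)).natAbs < A.natAbs := by omega
        refine finish_pivot (bv (iU 1 0)) (m1 (iU 1 1)) ?_ ?_ ?_ (ev_bv0 1 m1) h11 hρlt
        · simp only [bv]; rw [if_neg (by decide)]
        · simp only [bv]; rw [if_neg (by decide)]
        · rw [ev_bv0]; simp only [bv]; rw [if_neg (by decide)]
    · -- pivot at iU 1 0 : partner bv (iU 1 1)
      have hbnd := hrest_bound (iU 1 0) (by decide) (by decide)
      have hρlt : (m1 (iU 1 0)).natAbs < A.natAbs := by omega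
      refine finish_pivot (bv (iU 1 1)) (m1 (iU 1 0)) ?_ ?_ ?_ (ev_bv1 1 m1) h10 hρlt
      · simp only [bv]; rw [if_neg (by decide)]
      · simp only [bv]; rw [if_neg (by decide)]
      · rw [ev_bv1]; simp only [bv]; rw [if_neg (by decide)]

end StmtAux

namespace StmtAux

lemma iso_symm (g : VL ≃ₗ[ℤ] VL) (hi : ∀ a b : VL, bL (g a) (g b) = bL a b) :
    ∀ a b : VL, bL (g.symm a) (g.symm b) = bL a b := by
  intro a b
  have h2 := hi (g.symm a) (g.symm b)
  rw [g.apply_symm_apply, g.apply_symm_apply] at h2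
  exact h2.symm

lemma bL_v_eval (x : VL) : bL vv x = -2 * x vidx := by
  simp [bL, vv, vidx]

lemma emb_restr (x : VL) (hx : x vidx = 0) : emb (restr x) = x := by
  funext i
  rcases i with p | q | k
  · rfl
  · rfl
  · have hk : k = 0 := Subsingleton.elim k 0
    subst hk
    show (0:ℤ) = x (Sum.inr (Sum.inr 0))
    rw [← hx]; rfl

lemma toV (N : ℕ) : ∀ e : VL, (e vidx).natAbs ≤ N → bL e e = -2 →
    (∀ x : VL, (2:ℤ) ∣ bL e x) → Reach e vv := by
  induction N using Nat.strong_induction_on with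
  | _ N IH =>
  intro e hN he2 hdiv
  set m := mOf e with hmdef
  set c := e vidx with hcdef
  have hdecomp : e = (2:ℤ) • emb m + c • vv := decomp e hdiv
  have hinv : 2 * bM m m = c ^ 2 - 1 := by
    have h := bL_comb m m c c
    rw [← hdecomp, he2] at h
    nlinarith [h]
  rcases Int.even_or_odd c with ⟨t, ht⟩ | ⟨t, ht⟩
  · exfalso
    have h4 : 2 * bM m m = 4 * (t * t) - 1 := by rw [hinv, ht]; ring
    omega
  -- c = 2t+1 is odd
  by_cases h1 : c.natAbs ≤ 1
  · have hc1 : c = 1 ∨ c = -1 := by omega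
    rcases hc1 with h | h
    · have hm0 : bM m m = 0 := by rw [h] at hinv; linarith
      rw [hdecomp, h]
      exact endgame m hm0
    · have hm0 : bM m m = 0 := by rw [h] at hinv; linarith
      rw [hdecomp, h]
      have hv := reach_vneg m (-1)
      have hn : (-(-1) : ℤ) = 1 := by norm_num
      rw [hn] at hv
      exact reach_trans hv (endgame m hm0)
  · have hc3 : 3 ≤ c.natAbs := by omega
    obtain ⟨m', hmr, good⟩ := gather (m (iU 0 0)).natAbs c m (le_refl _) hinv hc3
    have hreach1 : Reach e ((2:ℤ) • emb m' + c • vv) := by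
      rw [hdecomp]; exact hmr c
    have hw0 : bM (bv (iU 0 0)) (bv (iU 0 0)) = 0 := by
      rw [ev_bv0]; simp only [bv]; rw [if_neg (by decide)]
    have hw1 : bM (bv (iU 0 1)) (bv (iU 0 1)) = 0 := by
      rw [ev_bv1]; simp only [bv]; rw [if_neg (by decide)]
    rcases good with ⟨hne, hlt⟩ | ⟨hne, hlt⟩
    · obtain ⟨m'', c', hr2, hle⟩ := coupling_gen m' c (m' (iU 0 1)) (bv (iU 0 0))
        hw0 (ev_bv0 0 m') hne
      have hreach2 : Reach e ((2:ℤ) • emb m'' + c' • vv) := reach_trans hreach1 hr2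
      have he2' := reach_he2 hreach2 he2
      have hdiv' := reach_div hreach2 hdiv
      have hvc : (((2:ℤ) • emb m'' + c' • vv) : VL) vidx = c' := comb_vidx m'' c'
      have hlt2 : c'.natAbs < N := by omega
      have := IH c'.natAbs hlt2 _ (by rw [hvc]) he2' hdiv'
      exact reach_trans hreach2 this
    · obtain ⟨m'', c', hr2, hle⟩ := coupling_gen m' c (m' (iU 0 0)) (bv (iU 0 1))
        hw1 (ev_bv1 0 m') hne
      have hreach2 : Reach e ((2:ℤ) • emb m'' + c' • vv) := reach_trans hreach1 hr2
      have he2' := reach_he2 hreach2 he2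
      have hdiv' := reach_div hreach2 hdiv
      have hvc : (((2:ℤ) • emb m'' + c' • vv) : VL) vidx = c' := comb_vidx m'' c'
      have hlt2 : c'.natAbs < N := by omega
      have := IH c'.natAbs hlt2 _ (by rw [hvc]) he2' hdiv'
      exact reach_trans hreach2 this

def embL : VM →ₗ[ℤ] VL where
  toFun := emb
  map_add' := emb_add
  map_smul' c a := by rw [RingHom.id_apply]; exact emb_smul c a

end StmtAux


open StmtAux

/-- In `L = U³ ⊕ E₈(-1)² ⊕ (-2)`, there is exactly one `O(L)`-orbit of vectors
`e` with `e² = -2` and divisibility `2` (i.e. `(e, L) = 2ℤ`): any two such are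
exchanged by an isometry of `L`. Moreover for such `e` one has `e ⊕ e^⊥ = L`
(every vector of `L` is `c·e + y` with `y ⟂ e`), and `e^⊥ ≅ U³ ⊕ E₈(-1)²`. -/
theorem stmt_17 (e : IdxL → ℤ)
    (he2 : bL e e = -2)
    (hdiv : (∀ x : IdxL → ℤ, (2 : ℤ) ∣ bL e x) ∧ ∃ x : IdxL → ℤ, bL e x = 2) :
    (∀ e' : IdxL → ℤ, bL e' e' = -2 →
      ((∀ x : IdxL → ℤ, (2 : ℤ) ∣ bL e' x) ∧ ∃ x : IdxL → ℤ, bL e' x = 2) →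
      ∃ g : (IdxL → ℤ) ≃ₗ[ℤ] (IdxL → ℤ),
        (∀ x y : IdxL → ℤ, bL (g x) (g y) = bL x y) ∧ g e = e') ∧
    (∀ x : IdxL → ℤ, ∃ (c : ℤ) (y : IdxL → ℤ), bL e y = 0 ∧ x = c • e + y) ∧
    (∃ f : (IdxM → ℤ) →ₗ[ℤ] (IdxL → ℤ),
      Function.Injective f ∧
      (∀ z : IdxM → ℤ, bL e (f z) = 0) ∧
      (∀ z w : IdxM → ℤ, bL (f z) (f w) = bM z w) ∧
      (∀ y : IdxL → ℤ, bL e y = 0 → ∃ z : IdxM → ℤ, f z = y)) := by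
  have hR : Reach e vv := toV (e vidx).natAbs e (le_refl _) he2 hdiv.1
  refine ⟨?_, ?_, ?_⟩
  · intro e' he2' hdiv'
    have hR' : Reach e' vv := toV (e' vidx).natAbs e' (le_refl _) he2' hdiv'.1
    exact reach_trans hR (reach_symm hR')
  · intro x
    obtain ⟨k, hk⟩ := hdiv.1 x
    refine ⟨-k, x + k • e, ?_, ?_⟩
    · rw [bL_add_right, bL_smul_right, hk, he2]; ring
    · module
  · obtain ⟨g, hi, hg⟩ := hR
    have hsymm := iso_symm g hi
    have hesym : g.symm vv = e := by rw [← hg, g.symm_apply_apply]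
    refine ⟨(g.symm : VL →ₗ[ℤ] VL).comp embL, ?_, ?_, ?_, ?_⟩
    · intro a b hab
      simp only [LinearMap.comp_apply, LinearEquiv.coe_coe] at hab
      have h1 : embL a = embL b := g.symm.injective hab
      funext j
      rcases j with p | q
      · exact congrFun h1 (Sum.inl p)
      · exact congrFun h1 (Sum.inr (Sum.inl q))
    · intro z
      simp only [LinearMap.comp_apply, LinearEquiv.coe_coe]
      rw [← hesym]
      have := hsymm vv (emb z)
      rw [bL_v_emb] at this
      exact this
    · intro z w
      simp only [LinearMap.comp_apply, LinearEquiv.coe_coe]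
      have : ∀ u : VM, embL u = emb u := fun u => rfl
      rw [this, this, hsymm, bL_emb_emb]
    · intro y hy
      have h0 : bL vv (g y) = 0 := by
        rw [← hg, hi]; exact hy
      rw [bL_v_eval] at h0
      have hv0 : (g y) vidx = 0 := by linarith
      refine ⟨restr (g y), ?_⟩
      simp only [LinearMap.comp_apply, LinearEquiv.coe_coe]
      show g.symm (emb (restr (g y))) = y
      rw [emb_restr _ hv0, g.symm_apply_apply]
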